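/- Suppose a topological group G acts transitively on topological spaces B and B₁, p : B₁ → B is a G-equivariant continuous map, b₁ ∈ B₁, b = p(b₁), and π : G → B is the orbit map π(g) = g·b. Form the pullback p*G = {(x, g) ∈ B₁ × G : p(x) = π(g)}. If there exists a neighborhood U₁ of b₁ in B₁ and a continuous map s₁ : U₁ → G with π ∘ s₁ = p|U₁ (a local section property at b₁), then the projection π' : p*G → B₁, π'(x,g) = x, is a principal G_b-bundle, where G_b is the stabilizer of b. -/

import Mathlib

open scoped Pointwise

/-- If a `G`-equivariant map `p : B₁ → B` between transitive `G`-spaces has a local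
section at `b₁`, then the pullback projection `π' : p*G → B₁` is a principal
`G_b`-bundle (it admits compatible local trivializations over a neighborhood of
every point). -/
theorem pullback_is_principal_bundle_of_local_section
    {G B B₁ : Type*} [Group G] [TopologicalSpace G] [IsTopologicalGroup G]
    [TopologicalSpace B] [TopologicalSpace B₁]
    [MulAction G B] [MulAction G B₁] [ContinuousSMul G B] [ContinuousSMul G B₁]
    (htransB : ∀ x y : B, ∃ g : G, g • x = y)
    (htransB₁ : ∀ x y : B₁, ∃ g : G, g • x = y)
    (p : B₁ → B) (hp : Continuous p)
    (heq : ∀ (g : G) (x : B₁), p (g • x) = g • p x)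
    (b₁ : B₁)
    (hsec : ∃ U₁ ∈ nhds b₁, ∃ s₁ : B₁ → G, ContinuousOn s₁ U₁ ∧
      ∀ x ∈ U₁, s₁ x • p b₁ = p x) :
    ∀ x : B₁, ∃ U : Set B₁, IsOpen U ∧ x ∈ U ∧
      ∃ φ : (↥U × ↥(MulAction.stabilizer G (p b₁))) ≃ₜ
          ↥{z : B₁ × G | p z.1 = z.2 • p b₁ ∧ z.1 ∈ U},
        (∀ w, ((φ w : B₁ × G)).1 = (w.1 : B₁)) ∧
        (∀ (w : ↥U × ↥(MulAction.stabilizer G (p b₁)))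
            (k : ↥(MulAction.stabilizer G (p b₁))),
          (φ (w.1, w.2 * k) : B₁ × G)
            = ((φ w : B₁ × G).1, (φ w : B₁ × G).2 * (k : G))) := by
  classical
  obtain ⟨U₁, hU₁, s₁, hs₁c, hs₁⟩ := hsec
  intro x
  obtain ⟨g, hg⟩ := htransB₁ b₁ x
  set V : Set B₁ := interior U₁ with hVdef
  have hbV : b₁ ∈ V := mem_interior_iff_mem_nhds.2 hU₁
  set U : Set B₁ := g • V with hUdef
  have hUopen : IsOpen U := isOpen_interior.smul g
  have hxU : x ∈ U := ⟨b₁, hbV, hg⟩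
  set σ : B₁ → G := fun u => g * s₁ (g⁻¹ • u) with hσdef
  have hmem : ∀ u ∈ U, g⁻¹ • u ∈ U₁ := by
    rintro u ⟨v, hv, rfl⟩
    simpa using interior_subset hv
  have hσsec : ∀ u ∈ U, σ u • p b₁ = p u := by
    intro u hu
    have h1 := hs₁ _ (hmem u hu)
    calc σ u • p b₁ = g • (s₁ (g⁻¹ • u) • p b₁) := mul_smul _ _ _
      _ = g • p (g⁻¹ • u) := by rw [h1]
      _ = p (g • g⁻¹ • u) := (heq _ _).symm
      _ = p u := by rw [smul_inv_smul]
  -- forward map lands in the pullback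
  have hfwd : ∀ w : ↥U × ↥(MulAction.stabilizer G (p b₁)),
      ((w.1 : B₁), σ (w.1 : B₁) * (w.2 : G)) ∈
        {z : B₁ × G | p z.1 = z.2 • p b₁ ∧ z.1 ∈ U} := by
    intro w
    refine ⟨?_, w.1.2⟩
    have hst : (w.2 : G) • p b₁ = p b₁ := w.2.2
    rw [mul_smul, hst, hσsec _ w.1.2]
  -- inverse map lands in the stabilizer
  have hinv : ∀ z : ↥{z : B₁ × G | p z.1 = z.2 • p b₁ ∧ z.1 ∈ U},
      (σ (z : B₁ × G).1)⁻¹ * (z : B₁ × G).2 ∈ MulAction.stabilizer G (p b₁) := by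
    intro z
    rw [MulAction.mem_stabilizer_iff, mul_smul, ← z.2.1, ← hσsec _ z.2.2,
      inv_smul_smul]
  -- continuity of σ on the relevant subtypes
  have hσU : Continuous fun u : ↥U => σ (u : B₁) := by
    refine Continuous.mul continuous_const ?_
    exact hs₁c.comp_continuous (continuous_subtype_val.const_smul g⁻¹)
      (fun u => hmem _ u.2)
  have hσZ : Continuous fun z : ↥{z : B₁ × G | p z.1 = z.2 • p b₁ ∧ z.1 ∈ U} =>
      σ (z : B₁ × G).1 := by
    refine Continuous.mul continuous_const ?_
    exact hs₁c.comp_continuous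
      ((continuous_fst.comp continuous_subtype_val).const_smul g⁻¹)
      (fun z => hmem _ z.2.2)
  refine ⟨U, hUopen, hxU, ?_⟩
  refine ⟨{
    toFun := fun w => ⟨((w.1 : B₁), σ (w.1 : B₁) * (w.2 : G)), hfwd w⟩
    invFun := fun z => (⟨(z : B₁ × G).1, z.2.2⟩,
      ⟨(σ (z : B₁ × G).1)⁻¹ * (z : B₁ × G).2, hinv z⟩)
    left_inv := by
      rintro ⟨u, k⟩
      refine Prod.ext (Subtype.ext rfl) (Subtype.ext ?_)
      simp [inv_mul_cancel_left]
    right_inv := by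
      rintro ⟨⟨z₁, z₂⟩, hz⟩
      refine Subtype.ext ?_
      simp [mul_inv_cancel_left]
    continuous_toFun := by
      refine Continuous.subtype_mk ?_ _
      exact (continuous_subtype_val.comp continuous_fst).prodMk
        ((hσU.comp continuous_fst).mul
          (continuous_subtype_val.comp continuous_snd))
    continuous_invFun := by
      refine Continuous.prodMk ?_ ?_
      · exact Continuous.subtype_mk
          (continuous_fst.comp continuous_subtype_val) _
      · exact Continuous.subtype_mk
          ((hσZ.inv).mul (continuous_snd.comp continuous_subtype_val)) _
    }, ?_, ?_⟩
  · intro w; rfl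
  · intro w k
    refine Prod.ext rfl ?_
    show σ (w.1 : B₁) * ((w.2 : G) * (k : G)) = σ (w.1 : B₁) * (w.2 : G) * (k : G)
    exact (mul_assoc _ _ _).symm
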